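/- For every integer r ≥ 2, the graph B_{2r,2r−1} has no perfect matching, every maximum matching of B_{2r,2r−1} leaves at least two vertices unsaturated, and for every maximum matching M of B_{2r,2r−1} any two distinct M-unsaturated vertices have a common neighbor. -/

import Mathlib

/-- A matching `M` of `G` is maximum if no matching of `G` has more edges. -/
def SimpleGraph.IsMaximumMatching {α : Type*} (G : SimpleGraph α) (M : G.Subgraph) : Prop :=
  M.IsMatching ∧ ∀ M' : G.Subgraph, M'.IsMatching → M'.edgeSet.ncard ≤ M.edgeSet.ncard

/-- The bipartite graph `B_{2r,2r-1}`: the left part `U` consists of the vertices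
`u_{(i,j)}` for `i < j` (encoded as `Sum.inl ⟨(i, j), hij⟩`), the right part `V` consists
of the vertices `v_k^{(i)}` (encoded as `Sum.inr (i, k)`), and `u_{(i,j)}` is joined
to `v_k^{(i)}` and `v_k^{(j)}` for all `k`. -/
def BGraph (r : ℕ) :
    SimpleGraph ({p : Fin (2 * r) × Fin (2 * r) // p.1 < p.2} ⊕ Fin (2 * r) × Fin r) where
  Adj a b :=
    match a, b with
    | .inl u, .inr v => v.1 = u.1.1 ∨ v.1 = u.1.2
    | .inr v, .inl u => v.1 = u.1.1 ∨ v.1 = u.1.2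
    | _, _ => False
  symm := ⟨by rintro (u | v) (u' | v') h <;> exact h⟩
  loopless := ⟨by rintro (u | v) h <;> exact h⟩

namespace BAux

abbrev U (r : ℕ) := {p : Fin (2 * r) × Fin (2 * r) // p.1 < p.2}
abbrev V (r : ℕ) := Fin (2 * r) × Fin r

/-- shape of adjacency: every edge goes between an `inl` and an `inr` -/
lemma adj_shape {r : ℕ} {x y : U r ⊕ V r} (h : (BGraph r).Adj x y) :
    (∃ u v, x = Sum.inl u ∧ y = Sum.inr v) ∨ (∃ u v, x = Sum.inr v ∧ y = Sum.inl u) := by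
  rcases x with u | v <;> rcases y with u' | v'
  · exact absurd h (by exact fun h => h)
  · exact Or.inl ⟨u, v', rfl, rfl⟩
  · exact Or.inr ⟨u', v, rfl, rfl⟩
  · exact absurd h (by exact fun h => h)

/-- the explicit injection `U → V` defining the matching `M0`. -/
def f (r : ℕ) (hr : 2 ≤ r) (u : U r) : V r :=
  if _ : (u.1.2 : ℕ) ≤ (u.1.1 : ℕ) + r then
    (u.1.1, ⟨(u.1.2 : ℕ) - (u.1.1 : ℕ) - 1, by
      have h1 : (u.1.1 : ℕ) < (u.1.2 : ℕ) := u.2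
      omega⟩)
  else
    (u.1.2, ⟨r - 1 - (u.1.1 : ℕ), by omega⟩)

lemma f_fst (r : ℕ) (hr : 2 ≤ r) (u : U r) :
    (f r hr u).1 = u.1.1 ∨ (f r hr u).1 = u.1.2 := by
  unfold f; split_ifs <;> simp

lemma f_adj (r : ℕ) (hr : 2 ≤ r) (u : U r) :
    (BGraph r).Adj (Sum.inl u) (Sum.inr (f r hr u)) := f_fst r hr u

lemma f_inj (r : ℕ) (hr : 2 ≤ r) : Function.Injective (f r hr) := by
  rintro ⟨⟨i1, j1⟩, h1⟩ ⟨⟨i2, j2⟩, h2⟩ heq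
  have h1' : (i1 : ℕ) < (j1 : ℕ) := h1
  have h2' : (i2 : ℕ) < (j2 : ℕ) := h2
  have hj1 : (j1 : ℕ) < 2 * r := j1.isLt
  have hj2 : (j2 : ℕ) < 2 * r := j2.isLt
  unfold f at heq
  dsimp only at heq
  split_ifs at heq with ha hb hb <;>
    simp only [Prod.mk.injEq, Fin.ext_iff, Fin.val_mk] at heq <;>
    (obtain ⟨e1, e2⟩ := heq) <;>
    · apply Subtype.ext
      simp only [Prod.mk.injEq, Fin.ext_iff]
      omega

/-- the matching saturating all of `U`. -/
def M0 (r : ℕ) (hr : 2 ≤ r) : (BGraph r).Subgraph where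
  verts := {x | ∃ u, x = Sum.inl u ∨ x = Sum.inr (f r hr u)}
  Adj x y := ∃ u, (x = Sum.inl u ∧ y = Sum.inr (f r hr u)) ∨
    (x = Sum.inr (f r hr u) ∧ y = Sum.inl u)
  adj_sub := by
    rintro x y ⟨u, ⟨rfl, rfl⟩ | ⟨rfl, rfl⟩⟩
    · exact f_adj r hr u
    · exact (f_adj r hr u).symm
  edge_vert := by
    rintro x y ⟨u, ⟨rfl, rfl⟩ | ⟨rfl, rfl⟩⟩
    · exact ⟨u, Or.inl rfl⟩
    · exact ⟨u, Or.inr rfl⟩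
  symm := ⟨by
    rintro x y ⟨u, ⟨rfl, rfl⟩ | ⟨rfl, rfl⟩⟩
    · exact ⟨u, Or.inr ⟨rfl, rfl⟩⟩
    · exact ⟨u, Or.inl ⟨rfl, rfl⟩⟩⟩

lemma M0_isMatching (r : ℕ) (hr : 2 ≤ r) : (M0 r hr).IsMatching := by
  rintro x ⟨u, rfl | rfl⟩
  · refine ⟨Sum.inr (f r hr u), ⟨u, Or.inl ⟨rfl, rfl⟩⟩, ?_⟩
    rintro y ⟨u', ⟨hu, rfl⟩ | ⟨hx, rfl⟩⟩
    · obtain rfl : u = u' := Sum.inl.inj hu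
      rfl
    · exact absurd hx.symm (by simp)
  · refine ⟨Sum.inl u, ⟨u, Or.inr ⟨rfl, rfl⟩⟩, ?_⟩
    rintro y ⟨u', ⟨hx, rfl⟩ | ⟨hu, rfl⟩⟩
    · exact absurd hx.symm (by simp)
    · obtain rfl : u = u' := f_inj r hr (Sum.inr.inj hu)
      rfl

open Classical in
/-- noncomputable partner function. -/
noncomputable def pf {r : ℕ} (M : (BGraph r).Subgraph) (x : U r ⊕ V r) : U r ⊕ V r :=
  if h : ∃ w, M.Adj x w then h.choose else x

lemma pf_adj {r : ℕ} {M : (BGraph r).Subgraph} {x : U r ⊕ V r} (h : ∃ w, M.Adj x w) :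
    M.Adj x (pf M x) := by
  unfold pf
  rw [dif_pos h]
  exact h.choose_spec

lemma pf_eq {r : ℕ} {M : (BGraph r).Subgraph} (hM : M.IsMatching) {x y : U r ⊕ V r}
    (h : M.Adj x y) : y = pf M x := by
  obtain ⟨w, _, hu⟩ := hM (M.edge_vert h)
  rw [hu y h, hu (pf M x) (pf_adj ⟨y, h⟩)]

/-- saturated left vertices -/
def SU {r : ℕ} (M : (BGraph r).Subgraph) : Set (U r) := {u | ∃ w, M.Adj (Sum.inl u) w}

lemma edgeSet_eq {r : ℕ} {M : (BGraph r).Subgraph} (hM : M.IsMatching) :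
    M.edgeSet = (fun u : U r => s(Sum.inl u, pf M (Sum.inl u))) '' SU M := by
  ext e
  refine e.ind (fun x y => ?_) 
  constructor
  · intro he
    rw [SimpleGraph.Subgraph.mem_edgeSet] at he
    rcases adj_shape (M.adj_sub he) with ⟨u, v, rfl, rfl⟩ | ⟨u, v, rfl, rfl⟩
    · refine ⟨u, ⟨_, he⟩, ?_⟩
      show s(Sum.inl u, pf M (Sum.inl u)) = s(Sum.inl u, Sum.inr v)
      rw [← pf_eq hM he]
    · refine ⟨u, ⟨_, he.symm⟩, ?_⟩
      show s(Sum.inl u, pf M (Sum.inl u)) = s(Sum.inr v, Sum.inl u)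
      rw [← pf_eq hM he.symm, Sym2.eq_swap]
  · rintro ⟨u, hu, he⟩
    rw [← he, SimpleGraph.Subgraph.mem_edgeSet]
    exact pf_adj hu

lemma injOn_left {r : ℕ} {M : (BGraph r).Subgraph} (hM : M.IsMatching) :
    Set.InjOn (fun u : U r => s(Sum.inl u, pf M (Sum.inl u))) (SU M) := by
  intro u1 h1 u2 h2 heq
  simp only [Sym2.eq_iff] at heq
  rcases heq with ⟨h, _⟩ | ⟨h, h'⟩
  · exact Sum.inl.inj h
  · exfalso
    rcases adj_shape (M.adj_sub (pf_adj h2)) with ⟨u', v', he1, he2⟩ | ⟨u', v', he1, he2⟩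
    · rw [he2] at h
      exact absurd h (by simp)
    · exact absurd he1 (by simp)

lemma ncard_edgeSet {r : ℕ} {M : (BGraph r).Subgraph} (hM : M.IsMatching) :
    M.edgeSet.ncard = (SU M).ncard := by
  rw [edgeSet_eq hM, Set.ncard_image_of_injOn (injOn_left hM)]

lemma SU_M0 (r : ℕ) (hr : 2 ≤ r) : SU (M0 r hr) = Set.univ := by
  ext u
  simp only [Set.mem_univ, iff_true]
  exact ⟨Sum.inr (f r hr u), ⟨u, Or.inl ⟨rfl, rfl⟩⟩⟩

/-- cardinality of `U r`. -/
def eU (r : ℕ) : U r ≃ Σ j : Fin (2 * r), Fin j.val where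
  toFun p := ⟨p.1.2, ⟨p.1.1, p.2⟩⟩
  invFun s := ⟨(⟨s.2.1, lt_trans s.2.2 s.1.2⟩, s.1), s.2.2⟩
  left_inv p := rfl
  right_inv s := rfl

lemma cardU (r : ℕ) : Fintype.card (U r) = r * (2 * r - 1) := by
  rw [Fintype.card_congr (eU r), Fintype.card_sigma]
  simp only [Fintype.card_fin]
  rw [Fin.sum_univ_eq_sum_range (fun i => i), Finset.sum_range_id]
  have : 2 * r * (2 * r - 1) = 2 * (r * (2 * r - 1)) := by ring
  rw [this, Nat.mul_div_cancel_left _ (by norm_num)]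

lemma cardV (r : ℕ) : Fintype.card (V r) = 2 * r * r := by simp

lemma cardUV (r : ℕ) (hr : 2 ≤ r) : Fintype.card (V r) = Fintype.card (U r) + r := by
  rw [cardU, cardV]
  have h2 : 2 * r - 1 + 1 = 2 * r := by omega
  calc 2 * r * r = r * (2 * r) := by ring
    _ = r * (2 * r - 1 + 1) := by rw [h2]
    _ = r * (2 * r - 1) + r := by rw [Nat.mul_succ]

lemma ncard_SU_le {r : ℕ} (M : (BGraph r).Subgraph) :
    (SU M).ncard ≤ Fintype.card (U r) := by
  have := Set.ncard_le_ncard (Set.subset_univ (SU M)) (Set.finite_univ)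
  rwa [Set.ncard_univ, Nat.card_eq_fintype_card] at this

/-- a maximum matching saturates all of `U`. -/
lemma max_SU {r : ℕ} (hr : 2 ≤ r) {M : (BGraph r).Subgraph}
    (hM : (BGraph r).IsMaximumMatching M) : SU M = Set.univ := by
  have hle := hM.2 (M0 r hr) (M0_isMatching r hr)
  rw [ncard_edgeSet (M0_isMatching r hr), ncard_edgeSet hM.1, SU_M0,
    Set.ncard_univ, Nat.card_eq_fintype_card] at hle
  have h2 := ncard_SU_le M
  refine Set.eq_of_subset_of_ncard_le (Set.subset_univ _) ?_
  rw [Set.ncard_univ, Nat.card_eq_fintype_card]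
  omega

/-- saturated right vertices -/
def TV {r : ℕ} (M : (BGraph r).Subgraph) : Set (V r) := {v | ∃ w, M.Adj (Sum.inr v) w}

lemma nonemptyU (r : ℕ) (hr : 2 ≤ r) : Nonempty (U r) :=
  ⟨⟨(⟨0, by omega⟩, ⟨1, by omega⟩), by simp [Fin.lt_def]⟩⟩

/-- partner of a saturated right vertex, as an element of `U`. -/
noncomputable def g {r : ℕ} (hr : 2 ≤ r) (M : (BGraph r).Subgraph) (v : V r) : U r :=
  Sum.elim id (fun _ => Classical.choice (nonemptyU r hr)) (pf M (Sum.inr v))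

lemma g_adj {r : ℕ} (hr : 2 ≤ r) {M : (BGraph r).Subgraph} {v : V r} (hv : v ∈ TV M) :
    M.Adj (Sum.inr v) (Sum.inl (g hr M v)) := by
  have hadj := pf_adj hv
  rcases adj_shape (M.adj_sub hadj) with ⟨u, v', h1, h2⟩ | ⟨u, v', h1, h2⟩
  · exact absurd h1 (by simp)
  · have hg : g hr M v = u := by
      unfold g
      rw [h2]
      rfl
    rw [hg, ← h2]
    exact hadj

lemma injOn_g {r : ℕ} (hr : 2 ≤ r) {M : (BGraph r).Subgraph} (hM : M.IsMatching) :
    Set.InjOn (g hr M) (TV M) := by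
  intro v1 h1 v2 h2 heq
  have a1 := (g_adj hr h1).symm
  have a2 := (g_adj hr h2).symm
  rw [heq] at a1
  obtain ⟨w, _, hu⟩ := hM (M.edge_vert a1)
  exact Sum.inr.inj ((hu _ a1).trans (hu _ a2).symm)

lemma ncard_TV_le {r : ℕ} (hr : 2 ≤ r) {M : (BGraph r).Subgraph} (hM : M.IsMatching) :
    (TV M).ncard ≤ Fintype.card (U r) := by
  have h1 : (g hr M '' TV M).ncard = (TV M).ncard :=
    Set.ncard_image_of_injOn (injOn_g hr hM)
  rw [← h1]
  have := Set.ncard_le_ncard (Set.subset_univ (g hr M '' TV M)) (Set.finite_univ)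
  rwa [Set.ncard_univ, Nat.card_eq_fintype_card] at this

end BAux

open BAux in
/-- `B_{2r,2r-1}` has no perfect matching, every maximum matching leaves at least two
vertices unsaturated, and for every maximum matching `M`, any two distinct
`M`-unsaturated vertices have a common neighbor. -/
theorem stmt_6 (r : ℕ) (hr : 2 ≤ r) :
    (¬ ∃ M : (BGraph r).Subgraph, M.IsPerfectMatching) ∧
    (∀ M : (BGraph r).Subgraph, (BGraph r).IsMaximumMatching M →
      ∃ a b, a ≠ b ∧ (∀ c, ¬ M.Adj a c) ∧ (∀ c, ¬ M.Adj b c)) ∧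
    (∀ M : (BGraph r).Subgraph, (BGraph r).IsMaximumMatching M →
      ∀ a b, a ≠ b → (∀ c, ¬ M.Adj a c) → (∀ c, ¬ M.Adj b c) →
        ∃ w, (BGraph r).Adj w a ∧ (BGraph r).Adj w b) := by
  refine ⟨?_, ?_, ?_⟩
  · -- no perfect matching
    rintro ⟨M, hM⟩
    have hTV : TV M = Set.univ := by
      ext v
      simp only [Set.mem_univ, iff_true]
      obtain ⟨w, hw, _⟩ := hM.1 (hM.2 (Sum.inr v))
      exact ⟨w, hw⟩
    have h1 := ncard_TV_le hr hM.1
    rw [hTV, Set.ncard_univ, Nat.card_eq_fintype_card] at h1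
    have h2 := cardUV r hr
    omega
  · -- at least two unsaturated vertices
    intro M hM
    have h1 := ncard_TV_le hr hM.1
    have h2 := Set.ncard_add_ncard_compl (TV M) (Set.toFinite _) (Set.toFinite _)
    rw [Nat.card_eq_fintype_card] at h2
    have h3 := cardUV r hr
    have h4 : 1 < (TV M)ᶜ.ncard := by omega
    rw [Set.one_lt_ncard (Set.toFinite _)] at h4
    obtain ⟨v1, hv1, v2, hv2, hne⟩ := h4
    refine ⟨Sum.inr v1, Sum.inr v2, by simpa using hne, ?_, ?_⟩
    · intro c hc; exact hv1 ⟨c, hc⟩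
    · intro c hc; exact hv2 ⟨c, hc⟩
  · -- unsaturated vertices have a common neighbor
    intro M hM a b hab ha hb
    have hSU := max_SU hr hM
    -- a and b are right vertices
    obtain ⟨v1, rfl⟩ : ∃ v, a = Sum.inr v := by
      rcases a with u | v
      · exfalso
        have : u ∈ SU M := hSU ▸ Set.mem_univ u
        obtain ⟨w, hw⟩ := this
        exact ha w hw
      · exact ⟨v, rfl⟩
    obtain ⟨v2, rfl⟩ : ∃ v, b = Sum.inr v := by
      rcases b with u | v
      · exfalso
        have : u ∈ SU M := hSU ▸ Set.mem_univ u
        obtain ⟨w, hw⟩ := this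
        exact hb w hw
      · exact ⟨v, rfl⟩
    rcases lt_trichotomy v1.1 v2.1 with hlt | heq | hgt
    · exact ⟨Sum.inl ⟨(v1.1, v2.1), hlt⟩, Or.inl rfl, Or.inr rfl⟩
    · by_cases h0 : (v1.1 : ℕ) = 0
      · refine ⟨Sum.inl ⟨(v1.1, ⟨1, by omega⟩), by simp [Fin.lt_def, h0]⟩, Or.inl rfl, Or.inl ?_⟩
        exact heq.symm
      · refine ⟨Sum.inl ⟨(⟨0, by omega⟩, v1.1), by simp [Fin.lt_def]; omega⟩, Or.inr rfl,
          Or.inr ?_⟩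
        exact heq.symm
    · exact ⟨Sum.inl ⟨(v2.1, v1.1), hgt⟩, Or.inr rfl, Or.inl rfl⟩
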